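/- Let $H$ be a real Hilbert space, $P_N : H \to H$ nonexpansive, and $J' : H \to H$ Lipschitz with constant $C_1$ and uniformly monotone with constant $C_2 > 0$. Fix $\rho$ with $\alpha^2 := 1 - 2C_2\rho + (1 + 2C_1^2)\rho^2 \in (0,1)$. Suppose $u^{*,N}$ satisfies $u^{*,N} = P_N(u^{*,N} - \rho J'(u^{*,N}))$, and the perturbed iteration $u^{i+1,N} = P_N(u^{i,N} - \rho J'_N(u^{i,N}))$ is run with $\sup_i \|J'(u^{i,N}) - J'_N(u^{i,N})\| \le \varepsilon$. Then for all $i$, $\|u^{*,N} - u^{i+1,N}\| \le \alpha^{i+1}\|u^{*,N} - u^{0,N}\| + \sqrt{1 + 2\rho^2}\,\frac{1 - \alpha^{i+1}}{1-\alpha}\,\varepsilon$. -/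

import Mathlib

theorem inexact_gradient_projection_error {H : Type*} [NormedAddCommGroup H]
    [InnerProductSpace ℝ H]
    (PN J' J'N : H → H) (C1 C2 ρ α ε : ℝ) (hρ : 0 < ρ) (hC2 : 0 < C2) (hε : 0 ≤ ε)
    (hPN : ∀ w z : H, ‖PN w - PN z‖ ≤ ‖w - z‖)
    (hLip : ∀ u v : H, ‖J' u - J' v‖ ≤ C1 * ‖u - v‖)
    (hmono : ∀ u v : H, C2 * ‖u - v‖ ^ 2 ≤ (inner ℝ (J' u - J' v) (u - v) : ℝ))
    (hα : α = Real.sqrt (1 - 2 * C2 * ρ + (1 + 2 * C1 ^ 2) * ρ ^ 2))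
    (hin : 0 < 1 - 2 * C2 * ρ + (1 + 2 * C1 ^ 2) * ρ ^ 2)
    (hin1 : 1 - 2 * C2 * ρ + (1 + 2 * C1 ^ 2) * ρ ^ 2 < 1)
    (ustar : H) (hfix : ustar = PN (ustar - ρ • J' ustar))
    (u : ℕ → H) (hit : ∀ i, u (i + 1) = PN (u i - ρ • J'N (u i)))
    (herr : ∀ i, ‖J' (u i) - J'N (u i)‖ ≤ ε) :
    ∀ i, ‖ustar - u (i + 1)‖
      ≤ α ^ (i + 1) * ‖ustar - u 0‖
        + Real.sqrt (1 + 2 * ρ ^ 2) * ((1 - α ^ (i + 1)) / (1 - α)) * ε := by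
  set K := Real.sqrt (1 + 2 * ρ ^ 2) with hK
  have hK0 : 0 ≤ K := Real.sqrt_nonneg _
  have hK2 : K ^ 2 = 1 + 2 * ρ ^ 2 := Real.sq_sqrt (by positivity)
  have hρK : ρ ≤ K := by nlinarith [sq_nonneg (K - ρ)]
  have hα0 : 0 ≤ α := hα ▸ Real.sqrt_nonneg _
  have hα2 : α ^ 2 = 1 - 2 * C2 * ρ + (1 + 2 * C1 ^ 2) * ρ ^ 2 := by
    rw [hα]; exact Real.sq_sqrt hin.le
  have hα1 : α < 1 := by nlinarith [sq_nonneg (1 - α)]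
  -- one step estimate
  have step : ∀ i, ‖ustar - u (i + 1)‖ ≤ α * ‖ustar - u i‖ + K * ε := by
    intro i
    set a := ustar - u i with ha
    set d := J' ustar - J' (u i) with hd
    set e := J' (u i) - J'N (u i) with he
    have h1 : ‖a - ρ • d‖ ≤ α * ‖a‖ := by
      have hLa : ‖d‖ ≤ C1 * ‖a‖ := hLip _ _
      have hm : C2 * ‖a‖ ^ 2 ≤ (inner ℝ d a : ℝ) := hmono _ _
      have hex : ‖a - ρ • d‖ ^ 2
          = ‖a‖ ^ 2 - 2 * (ρ * (inner ℝ a d : ℝ)) + ρ ^ 2 * ‖d‖ ^ 2 := by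
        rw [norm_sub_sq_real, real_inner_smul_right, norm_smul]
        rw [Real.norm_eq_abs, abs_of_pos hρ]
        ring
      have hsym : (inner ℝ a d : ℝ) = (inner ℝ d a : ℝ) := real_inner_comm _ _
      have hd2 : ‖d‖ ^ 2 ≤ C1 ^ 2 * ‖a‖ ^ 2 := by
        nlinarith [norm_nonneg d, norm_nonneg a]
      have hsq : ‖a - ρ • d‖ ^ 2 ≤ α ^ 2 * ‖a‖ ^ 2 := by
        rw [hex, hsym]
        nlinarith [sq_nonneg (C1 * ‖a‖), sq_nonneg ρ]
      nlinarith [norm_nonneg (a - ρ • d), norm_nonneg a, mul_nonneg hα0 (norm_nonneg a)]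
    have h2 : ‖ρ • e‖ ≤ K * ε := by
      rw [norm_smul, Real.norm_eq_abs, abs_of_pos hρ]
      calc ρ * ‖e‖ ≤ ρ * ε := by
            exact mul_le_mul_of_nonneg_left (herr i) hρ.le
        _ ≤ K * ε := mul_le_mul_of_nonneg_right hρK hε
    calc ‖ustar - u (i + 1)‖
        = ‖PN (ustar - ρ • J' ustar) - PN (u i - ρ • J'N (u i))‖ := by
          rw [hit i, ← hfix]
      _ ≤ ‖(ustar - ρ • J' ustar) - (u i - ρ • J'N (u i))‖ := hPN _ _
      _ = ‖(a - ρ • d) - ρ • e‖ := by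
          rw [ha, hd, he]; congr 1; rw [smul_sub, smul_sub]; abel
      _ ≤ ‖a - ρ • d‖ + ‖ρ • e‖ := norm_sub_le _ _
      _ ≤ α * ‖a‖ + K * ε := add_le_add h1 h2
  -- main induction
  have hne : 1 - α ≠ 0 := by linarith
  have main : ∀ i, ‖ustar - u i‖
      ≤ α ^ i * ‖ustar - u 0‖ + K * ((1 - α ^ i) / (1 - α)) * ε := by
    intro i
    induction i with
    | zero => simp
    | succ n ih =>
      calc ‖ustar - u (n + 1)‖ ≤ α * ‖ustar - u n‖ + K * ε := step n
        _ ≤ α * (α ^ n * ‖ustar - u 0‖ + K * ((1 - α ^ n) / (1 - α)) * ε) + K * ε := by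
            nlinarith [mul_le_mul_of_nonneg_left ih hα0]
        _ = α ^ (n + 1) * ‖ustar - u 0‖ + K * ((1 - α ^ (n + 1)) / (1 - α)) * ε := by
            field_simp
            ring
  exact fun i => main (i + 1)
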